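/- In the derivation algebra of the Zorn algebra with basis x₁,…,x₁₄ (obtained by setting each of the 14 parameters of the generic derivation matrix to 1 and the rest to 0), one has [x₁, x₂] = −2x₁₄, [x₁, x₃] = 2x₁₃, and [x₂, x₃] = −2x₁₂. -/

import Mathlib

open Matrix

abbrev Zorn (R : Type*) [CommRing R] : Type _ := (R × (Fin 3 → R)) × ((Fin 3 → R) × R)

variable {R : Type*} [CommRing R]

def zmul (X Y : Zorn R) : Zorn R :=
  ((X.1.1 * Y.1.1 + X.1.2 ⬝ᵥ Y.2.1,
    X.1.1 • Y.1.2 + Y.2.2 • X.1.2 - crossProduct X.2.1 Y.2.1),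
   (Y.1.1 • X.2.1 + X.2.2 • Y.2.1 + crossProduct X.1.2 Y.1.2,
    X.2.2 * Y.2.2 + X.2.1 ⬝ᵥ Y.1.2))

def zornOne : Zorn R := ((1, 0), (0, 1))
def zA : Zorn R := ((1, 0), (0, 0))
def zB : Zorn R := ((0, 0), (0, 1))
def zC (i : Fin 3) : Zorn R := ((0, Pi.single i 1), (0, 0))
def zD (i : Fin 3) : Zorn R := ((0, 0), (Pi.single i 1, 0))

def IsZornDeriv (d : Zorn R →ₗ[R] Zorn R) : Prop :=
  ∀ X Y : Zorn R, d (zmul X Y) = zmul (d X) Y + zmul X (d Y)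

def coorL : Zorn R →ₗ[R] (Fin 8 → R) where
  toFun X := ![X.1.1, X.2.2, X.1.2 0, X.1.2 1, X.1.2 2, X.2.1 0, X.2.1 1, X.2.1 2]
  map_add' X Y := by funext i; fin_cases i <;> rfl
  map_smul' c X := by funext i; fin_cases i <;> rfl

def zornL : (Fin 8 → R) →ₗ[R] Zorn R where
  toFun c := ((c 0, ![c 2, c 3, c 4]), (![c 5, c 6, c 7], c 1))
  map_add' x y := by
    refine Prod.ext (Prod.ext rfl ?_) (Prod.ext ?_ rfl) <;>
      (funext i; fin_cases i <;> rfl)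
  map_smul' c x := by
    refine Prod.ext (Prod.ext rfl ?_) (Prod.ext ?_ rfl) <;>
      (funext i; fin_cases i <;> rfl)

def genM (u v : Fin 3 → R) (w : Matrix (Fin 3) (Fin 3) R) : Matrix (Fin 8) (Fin 8) R :=
  !![0,0,u 0,u 1,u 2,v 0,v 1,v 2;
     0,0,-u 0,-u 1,-u 2,-v 0,-v 1,-v 2;
     -v 0,v 0,w 0 0,w 0 1,w 0 2,0,u 2,-u 1;
     -v 1,v 1,w 1 0,w 1 1,w 1 2,-u 2,0,u 0;
     -v 2,v 2,w 2 0,w 2 1,-w 0 0 - w 1 1,u 1,-u 0,0;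
     -u 0,u 0,0,v 2,-v 1,-w 0 0,-w 1 0,-w 2 0;
     -u 1,u 1,-v 2,0,v 0,-w 0 1,-w 1 1,-w 2 1;
     -u 2,u 2,v 1,-v 0,0,-w 0 2,-w 1 2,w 0 0 + w 1 1]

def paramM (p : Fin 14 → R) : Matrix (Fin 8) (Fin 8) R :=
  genM ![p 0, p 1, p 2] ![p 11, p 12, p 13]
    !![p 3, p 4, p 5; p 6, p 7, p 8; p 9, p 10, -(p 3 + p 7)]

def derOf (p : Fin 14 → R) : Zorn R →ₗ[R] Zorn R :=
  zornL ∘ₗ (paramM p).vecMulLinear ∘ₗ coorL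


section Aux

local notation "E" => Matrix.single

variable {F : Type*} [Field F]

lemma pmS0 : paramM (Pi.single 0 (1:F)) =
    E 0 2 1 - E 1 2 1 + E 3 7 1 - E 4 6 1 - E 5 0 1 + E 5 1 1 := by
  have h : paramM (Pi.single 0 (1:F)) = !![0,0,1,0,0,0,0,0; 0,0,-1,0,0,0,0,0; 0,0,0,0,0,0,0,0; 0,0,0,0,0,0,0,1;
       0,0,0,0,0,0,-1,0; -1,1,0,0,0,0,0,0; 0,0,0,0,0,0,0,0; 0,0,0,0,0,0,0,0] := by
    norm_num [paramM, genM, Pi.single_apply, Matrix.vecHead, Matrix.vecTail, Fin.ext_iff, Matrix.cons_val_two,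
      show ((3:Fin 14):ℕ) = 3 from rfl, show ((4:Fin 14):ℕ) = 4 from rfl,
      show ((5:Fin 14):ℕ) = 5 from rfl, show ((6:Fin 14):ℕ) = 6 from rfl,
      show ((7:Fin 14):ℕ) = 7 from rfl, show ((8:Fin 14):ℕ) = 8 from rfl,
      show ((9:Fin 14):ℕ) = 9 from rfl, show ((10:Fin 14):ℕ) = 10 from rfl,
      show ((11:Fin 14):ℕ) = 11 from rfl, show ((12:Fin 14):ℕ) = 12 from rfl,
      show ((13:Fin 14):ℕ) = 13 from rfl]
  rw [h, ← Matrix.ext_iff]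
  simp [Fin.forall_fin_succ, Matrix.single, Matrix.cons_val_zero,
    Matrix.cons_val_succ, Matrix.sub_apply, Matrix.add_apply, Fin.val_succ,
    show ((3:Fin 8):ℕ) = 3 from rfl, show ((4:Fin 8):ℕ) = 4 from rfl,
    show ((5:Fin 8):ℕ) = 5 from rfl, show ((6:Fin 8):ℕ) = 6 from rfl,
    show ((7:Fin 8):ℕ) = 7 from rfl]

lemma pmS1 : paramM (Pi.single 1 (1:F)) =
    E 0 3 1 - E 1 3 1 - E 2 7 1 + E 4 5 1 - E 6 0 1 + E 6 1 1 := by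
  have h : paramM (Pi.single 1 (1:F)) = !![0,0,0,1,0,0,0,0; 0,0,0,-1,0,0,0,0; 0,0,0,0,0,0,0,-1; 0,0,0,0,0,0,0,0;
       0,0,0,0,0,1,0,0; 0,0,0,0,0,0,0,0; -1,1,0,0,0,0,0,0; 0,0,0,0,0,0,0,0] := by
    norm_num [paramM, genM, Pi.single_apply, Matrix.vecHead, Matrix.vecTail, Fin.ext_iff, Matrix.cons_val_two,
      show ((3:Fin 14):ℕ) = 3 from rfl, show ((4:Fin 14):ℕ) = 4 from rfl,
      show ((5:Fin 14):ℕ) = 5 from rfl, show ((6:Fin 14):ℕ) = 6 from rfl,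
      show ((7:Fin 14):ℕ) = 7 from rfl, show ((8:Fin 14):ℕ) = 8 from rfl,
      show ((9:Fin 14):ℕ) = 9 from rfl, show ((10:Fin 14):ℕ) = 10 from rfl,
      show ((11:Fin 14):ℕ) = 11 from rfl, show ((12:Fin 14):ℕ) = 12 from rfl,
      show ((13:Fin 14):ℕ) = 13 from rfl]
  rw [h, ← Matrix.ext_iff]
  simp [Fin.forall_fin_succ, Matrix.single, Matrix.cons_val_zero,
    Matrix.cons_val_succ, Matrix.sub_apply, Matrix.add_apply, Fin.val_succ,
    show ((3:Fin 8):ℕ) = 3 from rfl, show ((4:Fin 8):ℕ) = 4 from rfl,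
    show ((5:Fin 8):ℕ) = 5 from rfl, show ((6:Fin 8):ℕ) = 6 from rfl,
    show ((7:Fin 8):ℕ) = 7 from rfl]

lemma pmS2 : paramM (Pi.single 2 (1:F)) =
    E 0 4 1 - E 1 4 1 + E 2 6 1 - E 3 5 1 - E 7 0 1 + E 7 1 1 := by
  have h : paramM (Pi.single 2 (1:F)) = !![0,0,0,0,1,0,0,0; 0,0,0,0,-1,0,0,0; 0,0,0,0,0,0,1,0; 0,0,0,0,0,-1,0,0;
       0,0,0,0,0,0,0,0; 0,0,0,0,0,0,0,0; 0,0,0,0,0,0,0,0; -1,1,0,0,0,0,0,0] := by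
    norm_num [paramM, genM, Pi.single_apply, Matrix.vecHead, Matrix.vecTail, Fin.ext_iff, Matrix.cons_val_two,
      show ((3:Fin 14):ℕ) = 3 from rfl, show ((4:Fin 14):ℕ) = 4 from rfl,
      show ((5:Fin 14):ℕ) = 5 from rfl, show ((6:Fin 14):ℕ) = 6 from rfl,
      show ((7:Fin 14):ℕ) = 7 from rfl, show ((8:Fin 14):ℕ) = 8 from rfl,
      show ((9:Fin 14):ℕ) = 9 from rfl, show ((10:Fin 14):ℕ) = 10 from rfl,
      show ((11:Fin 14):ℕ) = 11 from rfl, show ((12:Fin 14):ℕ) = 12 from rfl,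
      show ((13:Fin 14):ℕ) = 13 from rfl]
  rw [h, ← Matrix.ext_iff]
  simp [Fin.forall_fin_succ, Matrix.single, Matrix.cons_val_zero,
    Matrix.cons_val_succ, Matrix.sub_apply, Matrix.add_apply, Fin.val_succ,
    show ((3:Fin 8):ℕ) = 3 from rfl, show ((4:Fin 8):ℕ) = 4 from rfl,
    show ((5:Fin 8):ℕ) = 5 from rfl, show ((6:Fin 8):ℕ) = 6 from rfl,
    show ((7:Fin 8):ℕ) = 7 from rfl]

lemma pmS11 : paramM (Pi.single 11 (1:F)) =
    E 0 5 1 - E 1 5 1 - E 2 0 1 + E 2 1 1 + E 6 4 1 - E 7 3 1 := by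
  have h : paramM (Pi.single 11 (1:F)) = !![0,0,0,0,0,1,0,0; 0,0,0,0,0,-1,0,0; -1,1,0,0,0,0,0,0; 0,0,0,0,0,0,0,0;
       0,0,0,0,0,0,0,0; 0,0,0,0,0,0,0,0; 0,0,0,0,1,0,0,0; 0,0,0,-1,0,0,0,0] := by
    norm_num [paramM, genM, Pi.single_apply, Matrix.vecHead, Matrix.vecTail, Fin.ext_iff, Matrix.cons_val_two,
      show ((3:Fin 14):ℕ) = 3 from rfl, show ((4:Fin 14):ℕ) = 4 from rfl,
      show ((5:Fin 14):ℕ) = 5 from rfl, show ((6:Fin 14):ℕ) = 6 from rfl,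
      show ((7:Fin 14):ℕ) = 7 from rfl, show ((8:Fin 14):ℕ) = 8 from rfl,
      show ((9:Fin 14):ℕ) = 9 from rfl, show ((10:Fin 14):ℕ) = 10 from rfl,
      show ((11:Fin 14):ℕ) = 11 from rfl, show ((12:Fin 14):ℕ) = 12 from rfl,
      show ((13:Fin 14):ℕ) = 13 from rfl]
  rw [h, ← Matrix.ext_iff]
  simp [Fin.forall_fin_succ, Matrix.single, Matrix.cons_val_zero,
    Matrix.cons_val_succ, Matrix.sub_apply, Matrix.add_apply, Fin.val_succ,
    show ((3:Fin 8):ℕ) = 3 from rfl, show ((4:Fin 8):ℕ) = 4 from rfl,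
    show ((5:Fin 8):ℕ) = 5 from rfl, show ((6:Fin 8):ℕ) = 6 from rfl,
    show ((7:Fin 8):ℕ) = 7 from rfl]

lemma pmS12 : paramM (Pi.single 12 (1:F)) =
    E 0 6 1 - E 1 6 1 - E 3 0 1 + E 3 1 1 - E 5 4 1 + E 7 2 1 := by
  have h : paramM (Pi.single 12 (1:F)) = !![0,0,0,0,0,0,1,0; 0,0,0,0,0,0,-1,0; 0,0,0,0,0,0,0,0; -1,1,0,0,0,0,0,0;
       0,0,0,0,0,0,0,0; 0,0,0,0,-1,0,0,0; 0,0,0,0,0,0,0,0; 0,0,1,0,0,0,0,0] := by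
    norm_num [paramM, genM, Pi.single_apply, Matrix.vecHead, Matrix.vecTail, Fin.ext_iff, Matrix.cons_val_two,
      show ((3:Fin 14):ℕ) = 3 from rfl, show ((4:Fin 14):ℕ) = 4 from rfl,
      show ((5:Fin 14):ℕ) = 5 from rfl, show ((6:Fin 14):ℕ) = 6 from rfl,
      show ((7:Fin 14):ℕ) = 7 from rfl, show ((8:Fin 14):ℕ) = 8 from rfl,
      show ((9:Fin 14):ℕ) = 9 from rfl, show ((10:Fin 14):ℕ) = 10 from rfl,
      show ((11:Fin 14):ℕ) = 11 from rfl, show ((12:Fin 14):ℕ) = 12 from rfl,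
      show ((13:Fin 14):ℕ) = 13 from rfl]
  rw [h, ← Matrix.ext_iff]
  simp [Fin.forall_fin_succ, Matrix.single, Matrix.cons_val_zero,
    Matrix.cons_val_succ, Matrix.sub_apply, Matrix.add_apply, Fin.val_succ,
    show ((3:Fin 8):ℕ) = 3 from rfl, show ((4:Fin 8):ℕ) = 4 from rfl,
    show ((5:Fin 8):ℕ) = 5 from rfl, show ((6:Fin 8):ℕ) = 6 from rfl,
    show ((7:Fin 8):ℕ) = 7 from rfl]

lemma pmS13 : paramM (Pi.single 13 (1:F)) =
    E 0 7 1 - E 1 7 1 - E 4 0 1 + E 4 1 1 + E 5 3 1 - E 6 2 1 := by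
  have h : paramM (Pi.single 13 (1:F)) = !![0,0,0,0,0,0,0,1; 0,0,0,0,0,0,0,-1; 0,0,0,0,0,0,0,0; 0,0,0,0,0,0,0,0;
       -1,1,0,0,0,0,0,0; 0,0,0,1,0,0,0,0; 0,0,-1,0,0,0,0,0; 0,0,0,0,0,0,0,0] := by
    norm_num [paramM, genM, Pi.single_apply, Matrix.vecHead, Matrix.vecTail, Fin.ext_iff, Matrix.cons_val_two,
      show ((3:Fin 14):ℕ) = 3 from rfl, show ((4:Fin 14):ℕ) = 4 from rfl,
      show ((5:Fin 14):ℕ) = 5 from rfl, show ((6:Fin 14):ℕ) = 6 from rfl,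
      show ((7:Fin 14):ℕ) = 7 from rfl, show ((8:Fin 14):ℕ) = 8 from rfl,
      show ((9:Fin 14):ℕ) = 9 from rfl, show ((10:Fin 14):ℕ) = 10 from rfl,
      show ((11:Fin 14):ℕ) = 11 from rfl, show ((12:Fin 14):ℕ) = 12 from rfl,
      show ((13:Fin 14):ℕ) = 13 from rfl]
  rw [h, ← Matrix.ext_iff]
  simp [Fin.forall_fin_succ, Matrix.single, Matrix.cons_val_zero,
    Matrix.cons_val_succ, Matrix.sub_apply, Matrix.add_apply, Fin.val_succ,
    show ((3:Fin 8):ℕ) = 3 from rfl, show ((4:Fin 8):ℕ) = 4 from rfl,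
    show ((5:Fin 8):ℕ) = 5 from rfl, show ((6:Fin 8):ℕ) = 6 from rfl,
    show ((7:Fin 8):ℕ) = 7 from rfl]

end Aux

theorem multiplication_table_entries {F : Type*} [Field F] :
    (paramM (Pi.single 0 (1 : F))) * (paramM (Pi.single 1 1)) -
      (paramM (Pi.single 1 1)) * (paramM (Pi.single 0 1)) =
        (-2 : F) • paramM (Pi.single 13 1) ∧
    (paramM (Pi.single 0 (1 : F))) * (paramM (Pi.single 2 1)) -
      (paramM (Pi.single 2 1)) * (paramM (Pi.single 0 1)) =
        (2 : F) • paramM (Pi.single 12 1) ∧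
    (paramM (Pi.single 1 (1 : F))) * (paramM (Pi.single 2 1)) -
      (paramM (Pi.single 2 1)) * (paramM (Pi.single 1 1)) =
        (-2 : F) • paramM (Pi.single 11 1) := by
  rw [pmS0, pmS1, pmS2, pmS11, pmS12, pmS13]
  refine ⟨?_, ?_, ?_⟩ <;>
    · simp only [mul_sub, sub_mul, mul_add, add_mul, smul_sub, smul_add,
        Matrix.single_mul_single_same, Matrix.single_mul_single_of_ne, ne_eq,
        Fin.reduceEq, not_false_iff, one_mul]
      module
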